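/- Let d > −1 with d ≠ 0 and let q ∈ (1/2, 1). For ε ∈ (0, 1−q), let p^ε be the probability vector on 3 symbols (q, 1−q−ε, ε). Then the optimal exponential redundancy R^d_opt(p^ε) tends, as ε → 0⁺, to 1 + (1/d)·log₂( q^(1+d) + 2^d·(1−q)^(1+d) ); that is, the upper bound ω^d(q) (whose infimum is attained at λ = 1 when q > 1/2) is approached by these three-symbol distributions. -/

import Mathlib

open Real Finset Filter

/-- A valid codeword-length vector: all lengths at least 1 and the Kraft inequality holds. -/
def IsCode (n : ℕ) (l : Fin n → ℕ) : Prop :=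
  (∀ i, 1 ≤ l i) ∧ ∑ i, (2 : ℝ) ^ (-(l i : ℝ)) ≤ 1

/-- Exponential redundancy `R^d(p,l)`. -/
noncomputable def expRedundancy (n : ℕ) (d : ℝ) (p : Fin n → ℝ) (l : Fin n → ℕ) : ℝ :=
  (1 / d) * Real.logb 2 (∑ i, (p i) ^ (1 + d) * (2 : ℝ) ^ (d * (l i : ℝ)))

/-- Optimal exponential redundancy `R^d_opt(p)`. -/
noncomputable def expRedundancyOpt (n : ℕ) (d : ℝ) (p : Fin n → ℝ) : ℝ :=
  sInf { r | ∃ l : Fin n → ℕ, IsCode n l ∧ r = expRedundancy n d p l }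

private lemma rpow_neg_nat (k : ℕ) : (2:ℝ) ^ (-(k:ℝ)) = ((2:ℝ) ^ k)⁻¹ := by
  rw [Real.rpow_neg (by norm_num), Real.rpow_natCast]

private lemma code_two_le (l : Fin 3 → ℕ) (hl : IsCode 3 l) : 2 ≤ l 0 ∨ 2 ≤ l 1 := by
  by_contra hc
  push_neg at hc
  have h0 : l 0 = 1 := by have := hl.1 0; omega
  have h1 : l 1 = 1 := by have := hl.1 1; omega
  have h2 := hl.2
  rw [Fin.sum_univ_three, h0, h1, rpow_neg_nat, rpow_neg_nat] at h2
  have h3 : (0:ℝ) < 2 ^ (-(l 2:ℝ)) := Real.rpow_pos_of_pos two_pos _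
  norm_num at h2
  have h4 : (0:ℝ) < 2 ^ (l 2) := by positivity
  linarith

set_option maxHeartbeats 1000000 in
theorem stmt_12 (d : ℝ) (hd : -1 < d) (hd0 : d ≠ 0)
    (q : ℝ) (hq : q ∈ Set.Ioo (1 / 2 : ℝ) 1) :
    Filter.Tendsto (fun ε : ℝ => expRedundancyOpt 3 d ![q, 1 - q - ε, ε])
      (nhdsWithin 0 (Set.Ioo 0 (1 - q)))
      (nhds (1 + (1 / d) * Real.logb 2
        (q ^ (1 + d) + (2 : ℝ) ^ d * (1 - q) ^ (1 + d)))) := by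
  obtain ⟨hq1, hq2⟩ := hq
  have hqpos : 0 < q := by linarith
  have h1qpos : (0:ℝ) < 1 - q := by linarith
  have hd1 : 0 < 1 + d := by linarith
  set G : ℝ → ℝ → ℝ := fun c ε =>
    (1/d) * Real.logb 2 (q ^ (1+d) * (2:ℝ) ^ (d*(1:ℝ)) +
      (1-q-ε) ^ (1+d) * (2:ℝ) ^ (d*(2:ℝ)) + ε ^ (1+d) * c) with hG
  set A0 : ℝ := q ^ (1+d) * (2:ℝ) ^ (d*(1:ℝ)) + (1-q) ^ (1+d) * (2:ℝ) ^ (d*(2:ℝ)) with hA0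
  have hA0pos : 0 < A0 := by
    have := Real.rpow_pos_of_pos hqpos (1+d)
    have := Real.rpow_pos_of_pos h1qpos (1+d)
    have := Real.rpow_pos_of_pos (two_pos (α := ℝ)) (d*(1:ℝ))
    have := Real.rpow_pos_of_pos (two_pos (α := ℝ)) (d*(2:ℝ))
    positivity
  -- the limit value
  have hLval : (1/d) * Real.logb 2 A0 =
      1 + (1/d) * Real.logb 2 (q ^ (1+d) + (2:ℝ) ^ d * (1-q) ^ (1+d)) := by
    have hXpos : 0 < q ^ (1+d) + (2:ℝ) ^ d * (1-q) ^ (1+d) := by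
      have := Real.rpow_pos_of_pos hqpos (1+d)
      have := Real.rpow_pos_of_pos h1qpos (1+d)
      have := Real.rpow_pos_of_pos (two_pos (α := ℝ)) d
      positivity
    have e1 : A0 = (2:ℝ) ^ d * (q ^ (1+d) + (2:ℝ) ^ d * (1-q) ^ (1+d)) := by
      rw [hA0, show d*(2:ℝ) = d + d by ring, Real.rpow_add two_pos, mul_one]
      ring
    rw [e1, Real.logb_mul (ne_of_gt (Real.rpow_pos_of_pos two_pos d)) (ne_of_gt hXpos),
      Real.logb_rpow (b := 2) (by norm_num) (by norm_num), mul_add, one_div,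
      inv_mul_cancel₀ hd0]
  -- generic tendsto of G c
  have key : ∀ c : ℝ, Tendsto (fun ε : ℝ => G c ε) (nhdsWithin 0 (Set.Ioo 0 (1-q)))
      (nhds (1 + (1/d) * Real.logb 2 (q ^ (1+d) + (2:ℝ) ^ d * (1-q) ^ (1+d)))) := by
    intro c
    rw [← hLval]
    have c1 : ContinuousAt (fun ε : ℝ => (1-q-ε) ^ (1+d)) 0 := by
      apply ContinuousAt.rpow_const
      · exact (continuousAt_const.sub continuousAt_id)
      · left; simp; intro h; linarith
    have c2 : ContinuousAt (fun ε : ℝ => ε ^ (1+d)) 0 :=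
      continuousAt_id.rpow_const (Or.inr hd1.le)
    have cin : ContinuousAt (fun ε : ℝ => q ^ (1+d) * (2:ℝ) ^ (d*(1:ℝ)) +
        (1-q-ε) ^ (1+d) * (2:ℝ) ^ (d*(2:ℝ)) + ε ^ (1+d) * c) 0 :=
      (continuousAt_const.add (c1.mul continuousAt_const)).add (c2.mul continuousAt_const)
    have hval : q ^ (1+d) * (2:ℝ) ^ (d*(1:ℝ)) +
        (1-q-(0:ℝ)) ^ (1+d) * (2:ℝ) ^ (d*(2:ℝ)) + (0:ℝ) ^ (1+d) * c = A0 := by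
      rw [Real.zero_rpow (ne_of_gt hd1), hA0]; ring_nf
    have h1 : Tendsto (fun ε : ℝ => q ^ (1+d) * (2:ℝ) ^ (d*(1:ℝ)) +
        (1-q-ε) ^ (1+d) * (2:ℝ) ^ (d*(2:ℝ)) + ε ^ (1+d) * c)
        (nhdsWithin 0 (Set.Ioo 0 (1-q))) (nhds A0) := by
      have := cin.tendsto
      rw [hval] at this
      exact this.mono_left nhdsWithin_le_nhds
    have h2 : ContinuousAt (fun y : ℝ => (1/d) * Real.logb 2 y) A0 :=
      continuousAt_const.mul (Real.continuousAt_logb (ne_of_gt hA0pos))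
    exact h2.tendsto.comp h1
  -- per-ε facts
  have main : ∀ ε ∈ Set.Ioo (0:ℝ) (1-q),
      (if 0 < d then G 0 ε else G ((2:ℝ)^(d*(1:ℝ))) ε) ≤
        expRedundancyOpt 3 d ![q, 1-q-ε, ε] ∧
      expRedundancyOpt 3 d ![q, 1-q-ε, ε] ≤ G ((2:ℝ)^(d*(3:ℝ))) ε := by
    intro ε hε
    obtain ⟨hε0, hε1⟩ := hε
    have hbpos : 0 < 1 - q - ε := by linarith
    have hbq : 1 - q - ε ≤ q := by linarith
    have hQpos := Real.rpow_pos_of_pos hqpos (1+d)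
    have hBpos := Real.rpow_pos_of_pos hbpos (1+d)
    have hEpos := Real.rpow_pos_of_pos hε0 (1+d)
    have hQB : (1-q-ε) ^ (1+d) ≤ q ^ (1+d) := Real.rpow_le_rpow hbpos.le hbq hd1.le
    -- the sum for a code l
    have hsum : ∀ l : Fin 3 → ℕ,
        ∑ i, (![q, 1-q-ε, ε] i) ^ (1+d) * (2:ℝ) ^ (d * (l i : ℝ)) =
        q ^ (1+d) * (2:ℝ) ^ (d*(l 0 : ℝ)) + (1-q-ε) ^ (1+d) * (2:ℝ) ^ (d*(l 1 : ℝ)) +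
          ε ^ (1+d) * (2:ℝ) ^ (d*(l 2 : ℝ)) := by
      intro l
      rw [Fin.sum_univ_three]
      simp
    have hSpos : ∀ l : Fin 3 → ℕ,
        0 < q ^ (1+d) * (2:ℝ) ^ (d*(l 0 : ℝ)) + (1-q-ε) ^ (1+d) * (2:ℝ) ^ (d*(l 1 : ℝ)) +
          ε ^ (1+d) * (2:ℝ) ^ (d*(l 2 : ℝ)) := by
      intro l
      have t0 := Real.rpow_pos_of_pos (two_pos (α := ℝ)) (d*(l 0 : ℝ))
      have t1 := Real.rpow_pos_of_pos (two_pos (α := ℝ)) (d*(l 1 : ℝ))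
      have t2 := Real.rpow_pos_of_pos (two_pos (α := ℝ)) (d*(l 2 : ℝ))
      positivity
    -- the explicit code (1,2,3)
    have hcode : IsCode 3 ![1,2,3] := by
      constructor
      · intro i; fin_cases i <;> norm_num
      · rw [Fin.sum_univ_three]
        simp only [Matrix.cons_val_zero, Matrix.cons_val_one, Matrix.head_cons,
          Matrix.cons_val_two, Matrix.tail_cons]
        rw [rpow_neg_nat, rpow_neg_nat, rpow_neg_nat]
        norm_num
    have hmem : expRedundancy 3 d ![q, 1-q-ε, ε] ![1,2,3] ∈
        { r | ∃ l : Fin 3 → ℕ, IsCode 3 l ∧ r = expRedundancy 3 d ![q, 1-q-ε, ε] l } :=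
      ⟨![1,2,3], hcode, rfl⟩
    have hcodeval : expRedundancy 3 d ![q, 1-q-ε, ε] ![1,2,3] = G ((2:ℝ)^(d*(3:ℝ))) ε := by
      rw [expRedundancy, hsum]
      simp only [hG]
      norm_num [Matrix.cons_val_zero, Matrix.cons_val_one, Matrix.head_cons,
        Matrix.cons_val_two, Matrix.tail_cons]
    rcases hd0.lt_or_gt with hdneg | hdpos
    · -- d < 0 : upper bound on S
      have hd1d : (1:ℝ)/d < 0 := by
        apply div_neg_of_pos_of_neg one_pos hdneg
      have mono : ∀ x y : ℝ, x ≤ y → (2:ℝ) ^ (d*y) ≤ (2:ℝ) ^ (d*x) := by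
        intro x y h
        exact (Real.rpow_le_rpow_left_iff one_lt_two).mpr (by nlinarith)
      have bnd : ∀ l : Fin 3 → ℕ, IsCode 3 l →
          G ((2:ℝ)^(d*(1:ℝ))) ε ≤ expRedundancy 3 d ![q, 1-q-ε, ε] l := by
        intro l hl
        rw [expRedundancy, hsum]
        simp only [hG]
        have hSA : q ^ (1+d) * (2:ℝ) ^ (d*(l 0 : ℝ)) +
            (1-q-ε) ^ (1+d) * (2:ℝ) ^ (d*(l 1 : ℝ)) +
            ε ^ (1+d) * (2:ℝ) ^ (d*(l 2 : ℝ)) ≤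
            q ^ (1+d) * (2:ℝ) ^ (d*(1:ℝ)) + (1-q-ε) ^ (1+d) * (2:ℝ) ^ (d*(2:ℝ)) +
            ε ^ (1+d) * (2:ℝ)^(d*(1:ℝ)) := by
          have m2 : (2:ℝ) ^ (d*(l 2 : ℝ)) ≤ (2:ℝ) ^ (d*(1:ℝ)) := by
            apply mono; exact_mod_cast hl.1 2
          rcases code_two_le l hl with h2 | h2
          · -- 2 ≤ l 0, 1 ≤ l 1 : rearrangement
            have m0 : (2:ℝ) ^ (d*(l 0 : ℝ)) ≤ (2:ℝ) ^ (d*(2:ℝ)) := by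
              apply mono; exact_mod_cast h2
            have m1 : (2:ℝ) ^ (d*(l 1 : ℝ)) ≤ (2:ℝ) ^ (d*(1:ℝ)) := by
              apply mono; exact_mod_cast hl.1 1
            have h12 : (2:ℝ) ^ (d*(2:ℝ)) ≤ (2:ℝ) ^ (d*(1:ℝ)) := mono 1 2 (by norm_num)
            nlinarith [mul_nonneg (sub_nonneg.2 hQB) (sub_nonneg.2 h12),
              mul_le_mul_of_nonneg_left m0 hQpos.le,
              mul_le_mul_of_nonneg_left m1 hBpos.le,
              mul_le_mul_of_nonneg_left m2 hEpos.le]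
          · have m0 : (2:ℝ) ^ (d*(l 0 : ℝ)) ≤ (2:ℝ) ^ (d*(1:ℝ)) := by
              apply mono; exact_mod_cast hl.1 0
            have m1 : (2:ℝ) ^ (d*(l 1 : ℝ)) ≤ (2:ℝ) ^ (d*(2:ℝ)) := by
              apply mono; exact_mod_cast h2
            nlinarith [mul_le_mul_of_nonneg_left m0 hQpos.le,
              mul_le_mul_of_nonneg_left m1 hBpos.le,
              mul_le_mul_of_nonneg_left m2 hEpos.le]
        have := Real.logb_le_logb_of_le one_lt_two (hSpos l) hSA
        nlinarith [mul_le_mul_of_nonpos_left this (le_of_lt hd1d)]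
      have hbdd : BddBelow { r | ∃ l : Fin 3 → ℕ, IsCode 3 l ∧
          r = expRedundancy 3 d ![q, 1-q-ε, ε] l } := by
        refine ⟨G ((2:ℝ)^(d*(1:ℝ))) ε, ?_⟩
        rintro r ⟨l, hl, rfl⟩
        exact bnd l hl
      constructor
      · rw [if_neg (not_lt.mpr hdneg.le)]
        apply le_csInf ⟨_, hmem⟩
        rintro r ⟨l, hl, rfl⟩
        exact bnd l hl
      · rw [← hcodeval]
        exact csInf_le hbdd hmem
    · -- 0 < d : lower bound on S
      have hd1d : (0:ℝ) ≤ 1/d := by positivity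
      have mono : ∀ x y : ℝ, x ≤ y → (2:ℝ) ^ (d*x) ≤ (2:ℝ) ^ (d*y) := by
        intro x y h
        exact (Real.rpow_le_rpow_left_iff one_lt_two).mpr (by nlinarith)
      have bnd : ∀ l : Fin 3 → ℕ, IsCode 3 l →
          G 0 ε ≤ expRedundancy 3 d ![q, 1-q-ε, ε] l := by
        intro l hl
        rw [expRedundancy, hsum]
        simp only [hG]
        have hApos : 0 < q ^ (1+d) * (2:ℝ) ^ (d*(1:ℝ)) +
            (1-q-ε) ^ (1+d) * (2:ℝ) ^ (d*(2:ℝ)) + ε ^ (1+d) * 0 := by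
          have t0 := Real.rpow_pos_of_pos (two_pos (α := ℝ)) (d*(1:ℝ))
          have t1 := Real.rpow_pos_of_pos (two_pos (α := ℝ)) (d*(2:ℝ))
          nlinarith
        have hAS : q ^ (1+d) * (2:ℝ) ^ (d*(1:ℝ)) + (1-q-ε) ^ (1+d) * (2:ℝ) ^ (d*(2:ℝ)) +
            ε ^ (1+d) * 0 ≤
            q ^ (1+d) * (2:ℝ) ^ (d*(l 0 : ℝ)) + (1-q-ε) ^ (1+d) * (2:ℝ) ^ (d*(l 1 : ℝ)) +
            ε ^ (1+d) * (2:ℝ) ^ (d*(l 2 : ℝ)) := by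
          have m2 : (0:ℝ) ≤ ε ^ (1+d) * (2:ℝ) ^ (d*(l 2 : ℝ)) := by
            have := Real.rpow_pos_of_pos (two_pos (α := ℝ)) (d*(l 2 : ℝ))
            positivity
          rcases code_two_le l hl with h2 | h2
          · have m0 : (2:ℝ) ^ (d*(2:ℝ)) ≤ (2:ℝ) ^ (d*(l 0 : ℝ)) := by
              apply mono; exact_mod_cast h2
            have m1 : (2:ℝ) ^ (d*(1:ℝ)) ≤ (2:ℝ) ^ (d*(l 1 : ℝ)) := by
              apply mono; exact_mod_cast hl.1 1
            have h12 : (2:ℝ) ^ (d*(1:ℝ)) ≤ (2:ℝ) ^ (d*(2:ℝ)) := mono 1 2 (by norm_num)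
            nlinarith [mul_nonneg (sub_nonneg.2 hQB) (sub_nonneg.2 h12),
              mul_le_mul_of_nonneg_left m0 hQpos.le,
              mul_le_mul_of_nonneg_left m1 hBpos.le]
          · have m0 : (2:ℝ) ^ (d*(1:ℝ)) ≤ (2:ℝ) ^ (d*(l 0 : ℝ)) := by
              apply mono; exact_mod_cast hl.1 0
            have m1 : (2:ℝ) ^ (d*(2:ℝ)) ≤ (2:ℝ) ^ (d*(l 1 : ℝ)) := by
              apply mono; exact_mod_cast h2
            nlinarith [mul_le_mul_of_nonneg_left m0 hQpos.le,
              mul_le_mul_of_nonneg_left m1 hBpos.le]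
        have := Real.logb_le_logb_of_le one_lt_two hApos hAS
        nlinarith [mul_le_mul_of_nonneg_left this hd1d]
      have hbdd : BddBelow { r | ∃ l : Fin 3 → ℕ, IsCode 3 l ∧
          r = expRedundancy 3 d ![q, 1-q-ε, ε] l } := by
        refine ⟨G 0 ε, ?_⟩
        rintro r ⟨l, hl, rfl⟩
        exact bnd l hl
      constructor
      · rw [if_pos hdpos]
        apply le_csInf ⟨_, hmem⟩
        rintro r ⟨l, hl, rfl⟩
        exact bnd l hl
      · rw [← hcodeval]
        exact csInf_le hbdd hmem
  -- squeeze
  rcases lt_or_ge 0 d with hdpos | hdneg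
  · apply tendsto_of_tendsto_of_tendsto_of_le_of_le' (key 0) (key ((2:ℝ)^(d*(3:ℝ))))
    · filter_upwards [eventually_mem_nhdsWithin] with ε hε
      have := (main ε hε).1
      rwa [if_pos hdpos] at this
    · filter_upwards [eventually_mem_nhdsWithin] with ε hε
      exact (main ε hε).2
  · apply tendsto_of_tendsto_of_tendsto_of_le_of_le' (key ((2:ℝ)^(d*(1:ℝ))))
      (key ((2:ℝ)^(d*(3:ℝ))))
    · filter_upwards [eventually_mem_nhdsWithin] with ε hε
      have := (main ε hε).1
      rwa [if_neg (not_lt.mpr hdneg)] at this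
    · filter_upwards [eventually_mem_nhdsWithin] with ε hε
      exact (main ε hε).2
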